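/- Canonicity of axiom BD1: let F = (A, Q, ▷, ◇, ▷', ◇') be a heterogeneous LRC-algebra with canonical extensions A^δ, Q^δ, π-extended operation ▷^π, and σ-extended operations ◇^σ, ◇'^σ. Then ◇'^σ q ∧ (q ▷^π u) ≤ ◇^σ u for all q ∈ Q^δ and u ∈ A^δ. -/

import Mathlib

/-! ## Heterogeneous LRC-algebras -/

/-- A heterogeneous LRC-algebra `F = (W, R, ▷, ◇, ▷', ◇')`: `W` is a Heyting
algebra, `R` is a bounded distributive lattice with an associative product
`·` (here `mul`) preserving finite joins in each coordinate whose unit is the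
top element `1 = ⊤` of `R`; `◇ : W → W` (`dia`) and `◇' : R → W` (`diaR`)
preserve finite joins; `▷ : R × W → W` (`box`) turns finite joins in its first
coordinate into meets and is monotone in its second coordinate;
`▷' : R × R → W` (`boxR`) turns finite joins in its first coordinate into
meets and preserves finite meets in its second coordinate; and the axioms
B3, BD1, BD2 hold. -/
structure LRCAlgebra (W : Type*) (R : Type*) [iW : HeytingAlgebra W]
    [iR : DistribLattice R] [iB : BoundedOrder R] where
  mul : R → R → R
  mul_assoc : ∀ a b c, mul (mul a b) c = mul a (mul b c)
  mul_top : ∀ a, mul a ⊤ = a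
  top_mul : ∀ a, mul ⊤ a = a
  mul_sup_left : ∀ a b c, mul (a ⊔ b) c = mul a c ⊔ mul b c
  mul_sup_right : ∀ a b c, mul a (b ⊔ c) = mul a b ⊔ mul a c
  mul_bot_left : ∀ a, mul ⊥ a = ⊥
  mul_bot_right : ∀ a, mul a ⊥ = ⊥
  dia : W → W
  dia_bot : dia ⊥ = ⊥
  dia_sup : ∀ a b, dia (a ⊔ b) = dia a ⊔ dia b
  diaR : R → W
  diaR_bot : diaR ⊥ = ⊥
  diaR_sup : ∀ a b, diaR (a ⊔ b) = diaR a ⊔ diaR b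
  box : R → W → W
  box_sup : ∀ α β a, box (α ⊔ β) a = box α a ⊓ box β a
  box_bot : ∀ a, box ⊥ a = ⊤
  box_mono : ∀ (α : R) {a b : W}, a ≤ b → box α a ≤ box α b
  boxR : R → R → W
  boxR_sup : ∀ α β γ, boxR (α ⊔ β) γ = boxR α γ ⊓ boxR β γ
  boxR_bot : ∀ γ, boxR ⊥ γ = ⊤
  boxR_inf : ∀ α β γ, boxR α (β ⊓ γ) = boxR α β ⊓ boxR α γ
  boxR_top : ∀ α, boxR α ⊤ = ⊤
  b3 : ∀ α β a, box α (box β a) ≤ box (mul α β) a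
  bd1 : ∀ α a, diaR α ⊓ box α a ≤ dia a
  bd2 : ∀ α β, boxR α β ≤ box α (diaR β)

/-! ## Canonical extensions of bounded distributive lattices -/

/-- A *canonical extension* of a bounded distributive lattice `L` is a
complete (distributive) lattice `Lδ` containing `L` as a bounded sublattice
(via the embedding `e`) such that (denseness) every element of `Lδ` is both a
join of closed elements (meets of elements of `L`) and a meet of open elements
(joins of elements of `L`), and (compactness) whenever `⋀ e '' S ≤ ⋁ e '' T`
there are finite `F ⊆ S`, `G ⊆ T` with `⋀ e '' F ≤ ⋁ e '' G`. -/
structure CanonicalExtension (L : Type*) [DistribLattice L] [OrderBot L]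
    [OrderTop L] (Lδ : Type*) [CompleteLattice Lδ] where
  e : L → Lδ
  inj : Function.Injective e
  map_sup : ∀ a b, e (a ⊔ b) = e a ⊔ e b
  map_inf : ∀ a b, e (a ⊓ b) = e a ⊓ e b
  map_bot : e ⊥ = ⊥
  map_top : e ⊤ = ⊤
  dense_closed : ∀ u : Lδ,
    u = sSup {k | (∃ S : Set L, k = sInf (e '' S)) ∧ k ≤ u}
  dense_open : ∀ u : Lδ,
    u = sInf {o | (∃ S : Set L, o = sSup (e '' S)) ∧ u ≤ o}
  compact : ∀ S T : Set L, sInf (e '' S) ≤ sSup (e '' T) →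
    ∃ Fs Gs : Finset L, ↑Fs ⊆ S ∧ ↑Gs ⊆ T ∧
      sInf (e '' ↑Fs) ≤ sSup (e '' ↑Gs)

namespace CanonicalExtension

variable {L : Type*} [DistribLattice L] [OrderBot L] [OrderTop L]
  {Lδ : Type*} [CompleteLattice Lδ]

/-- An element of `Lδ` is *closed* if it is a meet of elements of `L`. -/
def IsClosed (C : CanonicalExtension L Lδ) (k : Lδ) : Prop :=
  ∃ S : Set L, k = sInf (C.e '' S)

/-- An element of `Lδ` is *open* if it is a join of elements of `L`. -/
def IsOpen (C : CanonicalExtension L Lδ) (o : Lδ) : Prop :=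
  ∃ S : Set L, o = sSup (C.e '' S)

end CanonicalExtension

/-! ## The σ- and π-extensions of the operations of a heterogeneous
LRC-algebra to the canonical extensions -/

section Extensions

variable {W R : Type*} [HeytingAlgebra W] [DistribLattice R] [BoundedOrder R]
  {Wδ Rδ : Type*} [CompletelyDistribLattice Wδ] [CompletelyDistribLattice Rδ]
  (F : LRCAlgebra W R)
  (CW : CanonicalExtension W Wδ) (CR : CanonicalExtension R Rδ)

/-- `◇^σ`: for closed `k`, `◇^σ k = ⋀{◇a : a ∈ W, k ≤ a}`, and for arbitrary
`u`, `◇^σ u = ⋁{◇^σ k : k closed, k ≤ u}`. -/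
noncomputable def diaSigma (u : Wδ) : Wδ :=
  ⨆ k : {k : Wδ // CW.IsClosed k ∧ k ≤ u},
    ⨅ a : {a : W // k.1 ≤ CW.e a}, CW.e (F.dia a.1)

/-- `◇'^σ`: for closed `κ`, `◇'^σ κ = ⋀{◇'α : α ∈ R, κ ≤ α}`, and for
arbitrary `q`, `◇'^σ q = ⋁{◇'^σ κ : κ closed, κ ≤ q}`. -/
noncomputable def diaRSigma (q : Rδ) : Wδ :=
  ⨆ κ : {κ : Rδ // CR.IsClosed κ ∧ κ ≤ q},
    ⨅ α : {α : R // κ.1 ≤ CR.e α}, CW.e (F.diaR α.1)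

/-- `κ ▷^π o` for `κ ∈ K(Rδ)`, `o ∈ O(Wδ)`:
`⋁{α ▷ a : a ∈ W, a ≤ o, α ∈ R, κ ≤ α}`. -/
noncomputable def boxPiKO (κ : Rδ) (o : Wδ) : Wδ :=
  ⨆ p : {p : R × W // CW.e p.2 ≤ o ∧ κ ≤ CR.e p.1}, CW.e (F.box p.1.1 p.1.2)

/-- `▷^π`: `q ▷^π u = ⋀{κ ▷^π o : o open, u ≤ o, κ closed, κ ≤ q}`. -/
noncomputable def boxPi (q : Rδ) (u : Wδ) : Wδ :=
  ⨅ x : {x : Rδ × Wδ // CW.IsOpen x.2 ∧ u ≤ x.2 ∧ CR.IsClosed x.1 ∧ x.1 ≤ q},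
    boxPiKO F CW CR x.1.1 x.1.2

/-- `κ ▷'^π ω` for `κ ∈ K(Rδ)`, `ω ∈ O(Rδ)`:
`⋁{α ▷' β : β ∈ R, β ≤ ω, α ∈ R, κ ≤ α}`. -/
noncomputable def boxRPiKO (κ ω : Rδ) : Wδ :=
  ⨆ p : {p : R × R // CR.e p.2 ≤ ω ∧ κ ≤ CR.e p.1}, CW.e (F.boxR p.1.1 p.1.2)

/-- `▷'^π`: `q ▷'^π w = ⋀{κ ▷'^π ω : ω open, w ≤ ω, κ closed, κ ≤ q}`. -/
noncomputable def boxRPi (q w : Rδ) : Wδ :=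
  ⨅ x : {x : Rδ × Rδ // CR.IsOpen x.2 ∧ w ≤ x.2 ∧ CR.IsClosed x.1 ∧ x.1 ≤ q},
    boxRPiKO F CW CR x.1.1 x.1.2

/-- `κ₁ ·^σ κ₂` for closed `κ₁, κ₂`: `⋀{α·β : α, β ∈ R, κ₁ ≤ α, κ₂ ≤ β}`. -/
noncomputable def mulSigmaKK (κ₁ κ₂ : Rδ) : Rδ :=
  ⨅ p : {p : R × R // κ₁ ≤ CR.e p.1 ∧ κ₂ ≤ CR.e p.2}, CR.e (F.mul p.1.1 p.1.2)

/-- `·^σ`: `q₁ ·^σ q₂ = ⋁{κ₁ ·^σ κ₂ : κ₁, κ₂ closed, κ₁ ≤ q₁, κ₂ ≤ q₂}`. -/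
noncomputable def mulSigma (q₁ q₂ : Rδ) : Rδ :=
  ⨆ p : {p : Rδ × Rδ // CR.IsClosed p.1 ∧ CR.IsClosed p.2 ∧
      p.1 ≤ q₁ ∧ p.2 ≤ q₂}, mulSigmaKK F CR p.1.1 p.1.2

end Extensions

variable {W R : Type*} [HeytingAlgebra W] [DistribLattice R] [BoundedOrder R]
  {Wδ Rδ : Type*} [CompletelyDistribLattice Wδ] [CompletelyDistribLattice Rδ]


/-! ## Auxiliary machinery: filters, prime filters, and the prime filter
theorem for bounded distributive lattices -/

section Filters

variable {L : Type*} [Lattice L] [OrderBot L] [OrderTop L]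

/-- A (not necessarily proper) filter, as a set. -/
structure GoodFilter (P : Set L) : Prop where
  top_mem : (⊤ : L) ∈ P
  up : ∀ ⦃a b : L⦄, a ≤ b → a ∈ P → b ∈ P
  inf_mem : ∀ ⦃a b : L⦄, a ∈ P → b ∈ P → a ⊓ b ∈ P

/-- An ideal, as a set. -/
structure GoodIdeal (I : Set L) : Prop where
  bot_mem : (⊥ : L) ∈ I
  down : ∀ ⦃a b : L⦄, a ≤ b → b ∈ I → a ∈ I
  sup_mem : ∀ ⦃a b : L⦄, a ∈ I → b ∈ I → a ⊔ b ∈ I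

/-- Primeness of a set. -/
def PrimeSet (P : Set L) : Prop := ∀ ⦃a b : L⦄, a ⊔ b ∈ P → a ∈ P ∨ b ∈ P

lemma GoodFilter.finsetInf_mem {P : Set L} (hP : GoodFilter P) (Fs : Finset L)
    (h : ↑Fs ⊆ P) : Fs.inf id ∈ P := by
  classical
  induction Fs using Finset.induction with
  | empty => simpa using hP.top_mem
  | @insert a s hx ih =>
    rw [Finset.inf_insert]
    exact hP.inf_mem (h (Finset.mem_coe.2 (Finset.mem_insert_self a s)))
      (ih fun x hxs => h (Finset.mem_coe.2 (Finset.mem_insert_of_mem (Finset.mem_coe.1 hxs))))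

lemma GoodIdeal.finsetSup_mem {I : Set L} (hI : GoodIdeal I) (Gs : Finset L)
    (h : ↑Gs ⊆ I) : Gs.sup id ∈ I := by
  classical
  induction Gs using Finset.induction with
  | empty => simpa using hI.bot_mem
  | @insert a s hx ih =>
    rw [Finset.sup_insert]
    exact hI.sup_mem (h (Finset.mem_coe.2 (Finset.mem_insert_self a s)))
      (ih fun x hxs => h (Finset.mem_coe.2 (Finset.mem_insert_of_mem (Finset.mem_coe.1 hxs))))

lemma PrimeSet.exists_of_finsetSup_mem {P : Set L} (hpr : PrimeSet P)
    (hb : (⊥ : L) ∉ P) (Gs : Finset L) (h : Gs.sup id ∈ P) :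
    ∃ g ∈ Gs, g ∈ P := by
  classical
  induction Gs using Finset.induction with
  | empty => simp at h; exact absurd h hb
  | @insert a s hx ih =>
    rw [Finset.sup_insert] at h
    rcases hpr h with h' | h'
    · exact ⟨a, Finset.mem_insert_self a s, h'⟩
    · rcases ih h' with ⟨g, hg1, hg2⟩
      exact ⟨g, Finset.mem_insert_of_mem hg1, hg2⟩

end Filters

section PIT

variable {L : Type*} [DistribLattice L] [OrderBot L] [OrderTop L]

/-- Prime filter theorem: a filter disjoint from an ideal extends to a prime
filter disjoint from the ideal. -/
lemma exists_primeFilter {F₀ I : Set L} (hF : GoodFilter F₀) (hI : GoodIdeal I)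
    (hd : ∀ x ∈ F₀, x ∉ I) :
    ∃ P, GoodFilter P ∧ PrimeSet P ∧ F₀ ⊆ P ∧ ∀ x ∈ P, x ∉ I := by
  classical
  set S : Set (Set L) := {G | GoodFilter G ∧ F₀ ⊆ G ∧ ∀ x ∈ G, x ∉ I} with hS
  have h0 : F₀ ∈ S := ⟨hF, le_refl _, hd⟩
  have hchain : ∀ c ⊆ S, IsChain (· ⊆ ·) c → c.Nonempty →
      ∃ ub ∈ S, ∀ s ∈ c, s ⊆ ub := by
    intro c hcS hchain hcne
    refine ⟨⋃₀ c, ⟨⟨?_, ?_, ?_⟩, ?_, ?_⟩, fun s hs => Set.subset_sUnion_of_mem hs⟩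
    · obtain ⟨G, hG⟩ := hcne
      exact ⟨G, hG, (hcS hG).1.top_mem⟩
    · rintro x y hxy ⟨G, hG, hxG⟩
      exact ⟨G, hG, (hcS hG).1.up hxy hxG⟩
    · rintro x y ⟨G, hG, hxG⟩ ⟨G', hG', hyG'⟩
      rcases hchain.total hG hG' with h | h
      · exact ⟨G', hG', (hcS hG').1.inf_mem (h hxG) hyG'⟩
      · exact ⟨G, hG, (hcS hG).1.inf_mem hxG (h hyG')⟩
    · obtain ⟨G, hG⟩ := hcne
      exact ((hcS hG).2.1).trans (Set.subset_sUnion_of_mem hG)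
    · rintro x ⟨G, hG, hxG⟩ hxI
      exact (hcS hG).2.2 x hxG hxI
  obtain ⟨P, hFP, hPS, hmax⟩ := zorn_subset_nonempty S hchain F₀ h0
  · obtain ⟨hPfil, hF₀P, hPd⟩ := hPS
    refine ⟨P, hPfil, ?_, hF₀P, hPd⟩
    intro a b hab
    by_contra hcon
    push_neg at hcon
    obtain ⟨ha, hb⟩ := hcon
    -- extension of P by c
    have key : ∀ c : L, c ∉ P → (∃ ic ∈ I, ∃ gc ∈ P, gc ⊓ c ≤ ic) := by
      intro c hc
      set G : Set L := {w | ∃ g ∈ P, g ⊓ c ≤ w} with hG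
      have hGfil : GoodFilter G :=
        ⟨⟨⊤, hPfil.top_mem, le_top⟩,
         fun x y hxy hx => by obtain ⟨g, hg, hgx⟩ := hx; exact ⟨g, hg, hgx.trans hxy⟩,
         fun x y hx hy => by
           obtain ⟨g, hg, hgx⟩ := hx; obtain ⟨g', hg', hgy⟩ := hy
           exact ⟨g ⊓ g', hPfil.inf_mem hg hg',
             le_inf ((inf_le_inf_right _ inf_le_left).trans hgx)
                    ((inf_le_inf_right _ inf_le_right).trans hgy)⟩⟩
      have hPG : P ⊆ G := fun x hx => ⟨x, hx, inf_le_left⟩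
      have hcG : c ∈ G := ⟨⊤, hPfil.top_mem, by simp⟩
      by_contra hno
      push_neg at hno
      have hGS : G ∈ S := ⟨hGfil, hF₀P.trans hPG, by
        intro x hx hxI
        obtain ⟨g, hg, hgx⟩ := hx
        exact hno _ (hI.down hgx hxI) g hg le_rfl⟩
      have := hmax hGS hPG
      exact hc (this hcG)
    obtain ⟨ia, hia, ga, hga, hga2⟩ := key a ha
    obtain ⟨ib, hib, gb, hgb, hgb2⟩ := key b hb
    have hmem : (ga ⊓ gb) ⊓ (a ⊔ b) ∈ P := hPfil.inf_mem (hPfil.inf_mem hga hgb) hab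
    have hle : (ga ⊓ gb) ⊓ (a ⊔ b) ≤ ia ⊔ ib := by
      rw [inf_sup_left]
      refine sup_le_sup ?_ ?_
      · exact le_trans (inf_le_inf_right _ inf_le_left) hga2
      · exact le_trans (inf_le_inf_right _ inf_le_right) hgb2
    exact hPd _ (hPfil.up hle hmem) (hI.sup_mem hia hib)

end PIT

/-! ## Auxiliary facts about canonical extensions -/

namespace CanonicalExtension

variable {L : Type*} [DistribLattice L] [OrderBot L] [OrderTop L]
  {Lδ : Type*} [CompleteLattice Lδ] (C : CanonicalExtension L Lδ)

lemma e_mono {a b : L} (h : a ≤ b) : C.e a ≤ C.e b := by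
  have : a ⊓ b = a := inf_eq_left.2 h
  calc C.e a = C.e (a ⊓ b) := by rw [this]
    _ = C.e a ⊓ C.e b := C.map_inf a b
    _ ≤ C.e b := inf_le_right

lemma le_of_e_le_e {a b : L} (h : C.e a ≤ C.e b) : a ≤ b := by
  have h1 : C.e (a ⊓ b) = C.e a := by rw [C.map_inf]; exact inf_eq_left.2 h
  have := C.inj h1
  exact inf_eq_left.1 this

lemma sInf_image_finset (Fs : Finset L) :
    sInf (C.e '' ↑Fs) = C.e (Fs.inf id) := by
  classical
  induction Fs using Finset.induction with
  | empty => simp [C.map_top]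
  | @insert a s hx ih =>
    rw [Finset.coe_insert, Set.image_insert_eq, sInf_insert, Finset.inf_insert, C.map_inf, ih]
    rfl

lemma sSup_image_finset (Gs : Finset L) :
    sSup (C.e '' ↑Gs) = C.e (Gs.sup id) := by
  classical
  induction Gs using Finset.induction with
  | empty => simp [C.map_bot]
  | @insert a s hx ih =>
    rw [Finset.coe_insert, Set.image_insert_eq, sSup_insert, Finset.sup_insert, C.map_sup, ih]
    rfl

/-- Membership detection: if the closed element of a filter lies below `e b`,
then `b` belongs to the filter. -/
lemma mem_of_closed_le {P : Set L} (hP : GoodFilter P) {b : L}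
    (h : sInf (C.e '' P) ≤ C.e b) : b ∈ P := by
  classical
  have h' : sInf (C.e '' P) ≤ sSup (C.e '' {b}) := by
    rwa [Set.image_singleton, sSup_singleton]
  obtain ⟨Fs, Gs, hFsP, hGsb, hle⟩ := C.compact P {b} h'
  rw [C.sInf_image_finset, C.sSup_image_finset] at hle
  have hle' : Fs.inf id ≤ Gs.sup id := C.le_of_e_le_e hle
  have hFs : Fs.inf id ∈ P := hP.finsetInf_mem Fs hFsP
  have : Gs.sup id ≤ b := by
    refine Finset.sup_le fun g hg => ?_
    have := hGsb (Finset.mem_coe.2 hg)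
    simp only [Set.mem_singleton_iff] at this
    simp [this]
  exact hP.up (hle'.trans this) hFs

/-- Key lemma: if the closed element of a proper prime filter lies below a
join of `e`-images, then one of them already belongs to the filter. -/
lemma exists_mem_of_closed_le_iSup {P : Set L} (hP : GoodFilter P)
    (hpr : PrimeSet P) (hb : (⊥ : L) ∉ P) {ι : Sort*} (g : ι → L)
    (h : sInf (C.e '' P) ≤ ⨆ i, C.e (g i)) : ∃ i, g i ∈ P := by
  classical
  have h' : sInf (C.e '' P) ≤ sSup (C.e '' Set.range g) := by
    rw [← Set.range_comp, sSup_range]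
    exact h
  obtain ⟨Fs, Gs, hFsP, hGsr, hle⟩ := C.compact P (Set.range g) h'
  rw [C.sInf_image_finset, C.sSup_image_finset] at hle
  have hle' : Fs.inf id ≤ Gs.sup id := C.le_of_e_le_e hle
  have hFs : Fs.inf id ∈ P := hP.finsetInf_mem Fs hFsP
  have hsup : Gs.sup id ∈ P := hP.up hle' hFs
  obtain ⟨w, hwGs, hwP⟩ := hpr.exists_of_finsetSup_mem hb Gs hsup
  obtain ⟨i, rfl⟩ := hGsr (Finset.mem_coe.2 hwGs)
  exact ⟨i, hwP⟩

/-- Every nonbottom closed element is below the join of the closed elements of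
the prime filters refining its filter. -/
lemma closed_le_sSup_primes {m : Lδ} {S : Set L} (hm : m = sInf (C.e '' S))
    (hb : m ≠ ⊥) :
    m ≤ sSup {x | ∃ P : Set L, GoodFilter P ∧ PrimeSet P ∧ (⊥ : L) ∉ P ∧
      {w | m ≤ C.e w} ⊆ P ∧ x = sInf (C.e '' P)} := by
  classical
  set Fm : Set L := {w | m ≤ C.e w} with hFm
  have hFmfil : GoodFilter Fm :=
    ⟨by simp [hFm, C.map_top], fun a b hab ha => le_trans ha (C.e_mono hab),
     fun a b ha hb' => by rw [Set.mem_setOf_eq, C.map_inf]; exact le_inf ha hb'⟩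
  have hbotFm : (⊥ : L) ∉ Fm := by
    intro hcon
    rw [Set.mem_setOf_eq, C.map_bot, le_bot_iff] at hcon
    exact hb hcon
  set Z : Lδ := sSup {x | ∃ P : Set L, GoodFilter P ∧ PrimeSet P ∧ (⊥ : L) ∉ P ∧
      Fm ⊆ P ∧ x = sInf (C.e '' P)} with hZ
  show m ≤ Z
  rw [C.dense_open Z]
  refine le_sInf ?_
  rintro o ⟨⟨T, rfl⟩, hZo⟩
  -- the ideal generated by T
  set I : Set L := {w | ∃ Gs : Finset L, ↑Gs ⊆ T ∧ w ≤ Gs.sup id} with hI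
  have hIid : GoodIdeal I :=
    ⟨⟨∅, by simp, by simp⟩,
     fun a b hab hb' => by obtain ⟨Gs, h1, h2⟩ := hb'; exact ⟨Gs, h1, hab.trans h2⟩,
     fun a b ha hb' => by
       obtain ⟨Gs, h1, h2⟩ := ha; obtain ⟨Gs', h1', h2'⟩ := hb'
       refine ⟨Gs ∪ Gs', by rw [Finset.coe_union]; exact Set.union_subset h1 h1', ?_⟩
       exact sup_le (h2.trans (Finset.sup_mono Finset.subset_union_left))
         (h2'.trans (Finset.sup_mono Finset.subset_union_right))⟩
  by_cases hdisj : ∀ x ∈ Fm, x ∉ I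
  · exfalso
    obtain ⟨P, hPfil, hPpr, hFmP, hPd⟩ := exists_primeFilter hFmfil hIid hdisj
    have hbotP : (⊥ : L) ∉ P := fun hc => hPd ⊥ hc hIid.bot_mem
    have hxZ : sInf (C.e '' P) ≤ Z := le_sSup ⟨P, hPfil, hPpr, hbotP, hFmP, rfl⟩
    have hxo : sInf (C.e '' P) ≤ sSup (C.e '' T) := hxZ.trans hZo
    -- get an element of T in P
    have hxo' : sInf (C.e '' P) ≤ ⨆ t : T, C.e (t : L) := by
      rwa [sSup_image'] at hxo
    obtain ⟨t, htP⟩ := C.exists_mem_of_closed_le_iSup hPfil hPpr hbotP _ hxo'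
    refine hPd _ htP ⟨{(t : L)}, by simpa using t.2, by simp⟩
  · push_neg at hdisj
    obtain ⟨w, hwFm, hwI⟩ := hdisj
    obtain ⟨Gs, hGsT, hwGs⟩ := hwI
    calc m ≤ C.e w := hwFm
      _ ≤ C.e (Gs.sup id) := C.e_mono hwGs
      _ = sSup (C.e '' ↑Gs) := (C.sSup_image_finset Gs).symm
      _ ≤ sSup (C.e '' T) := sSup_le_sSup (Set.image_mono hGsT)

end CanonicalExtension

section CoreArgument

variable {W R : Type*} [HeytingAlgebra W] [DistribLattice R] [BoundedOrder R]
  {Wδ Rδ : Type*} [CompletelyDistribLattice Wδ] [CompletelyDistribLattice Rδ]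

/-- The core of the canonicity argument, per prime filter. -/
lemma prime_core (F : LRCAlgebra W R)
    (CW : CanonicalExtension W Wδ) (CR : CanonicalExtension R Rδ)
    (q : Rδ) (u : Wδ) (κ : Rδ) (hκc : CR.IsClosed κ) (hκq : κ ≤ q)
    (P : Set W) (hPfil : GoodFilter P) (hPpr : PrimeSet P) (hbotP : (⊥ : W) ∉ P)
    (h1 : ∀ α : R, κ ≤ CR.e α → F.diaR α ∈ P)
    (hbox : sInf (CW.e '' P) ≤ boxPi F CW CR q u) :
    sInf (CW.e '' P) ≤ diaSigma F CW u := by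
  classical
  -- Step 1: for every open o ≥ u, find a with e a ≤ o and dia a ∈ P
  have h2 : ∀ o : Wδ, CW.IsOpen o → u ≤ o → ∃ a : W, CW.e a ≤ o ∧ F.dia a ∈ P := by
    intro o ho huo
    have hb1 : boxPi F CW CR q u ≤ boxPiKO F CW CR κ o :=
      iInf_le _ (⟨(κ, o), ho, huo, hκc, hκq⟩ :
        {x : Rδ × Wδ // CW.IsOpen x.2 ∧ u ≤ x.2 ∧ CR.IsClosed x.1 ∧ x.1 ≤ q})
    have hx : sInf (CW.e '' P) ≤
        ⨆ p : {p : R × W // CW.e p.2 ≤ o ∧ κ ≤ CR.e p.1}, CW.e (F.box p.1.1 p.1.2) :=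
      hbox.trans hb1
    obtain ⟨p, hp⟩ := CW.exists_mem_of_closed_le_iSup hPfil hPpr hbotP _ hx
    refine ⟨p.1.2, p.2.1, ?_⟩
    exact hPfil.up (F.bd1 p.1.1 p.1.2) (hPfil.inf_mem (h1 p.1.1 p.2.2) hp)
  -- Step 2: the ideal of elements whose diamond is not in P
  set J : Set W := {a | F.dia a ∉ P} with hJ
  have hdia_mono : ∀ {a b : W}, a ≤ b → F.dia a ≤ F.dia b := by
    intro a b hab
    have : F.dia b = F.dia a ⊔ F.dia b := by
      rw [← F.dia_sup, sup_eq_right.2 hab]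
    rw [this]; exact le_sup_left
  have hJid : GoodIdeal J :=
    ⟨by simp [hJ, F.dia_bot]; exact hbotP,
     fun a b hab hbJ haJ => hbJ (hPfil.up (hdia_mono hab) haJ),
     fun a b ha hb' hcon => by
       rw [Set.mem_setOf_eq] at ha hb'
       rw [F.dia_sup] at hcon
       rcases hPpr hcon with h | h
       · exact ha h
       · exact hb' h⟩
  set oJ : Wδ := sSup (CW.e '' J) with hoJ
  by_cases huoJ : u ≤ oJ
  · exfalso
    obtain ⟨a, haoJ, hdiaP⟩ := h2 oJ ⟨J, rfl⟩ huoJ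
    -- a ≤ some finite join of elements of J, hence a ∈ J
    have h' : sInf (CW.e '' {a}) ≤ sSup (CW.e '' J) := by
      rwa [Set.image_singleton, sInf_singleton]
    obtain ⟨Fs, Gs, hFsa, hGsJ, hle⟩ := CW.compact {a} J h'
    rw [CW.sInf_image_finset, CW.sSup_image_finset] at hle
    have hle' : Fs.inf id ≤ Gs.sup id := CW.le_of_e_le_e hle
    have haFs : a ≤ Fs.inf id := by
      refine Finset.le_inf fun b hb => ?_
      have := hFsa (Finset.mem_coe.2 hb)
      simp only [Set.mem_singleton_iff] at this
      simp [this]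
    have haJ : a ∈ J := hJid.down (haFs.trans hle') (hJid.finsetSup_mem Gs hGsJ)
    exact haJ hdiaP
  · -- find closed k ≤ u with k ≰ oJ
    have : ∃ k : Wδ, CW.IsClosed k ∧ k ≤ u ∧ ¬ k ≤ oJ := by
      by_contra hcon
      push_neg at hcon
      apply huoJ
      calc u = sSup {k | (∃ S : Set W, k = sInf (CW.e '' S)) ∧ k ≤ u} := CW.dense_closed u
        _ ≤ oJ := sSup_le fun k ⟨hc, hku⟩ => hcon k hc hku
    obtain ⟨k, hkc, hku, hkoJ⟩ := this
    refine le_trans ?_ (le_iSup _ (⟨k, hkc, hku⟩ : {k : Wδ // CW.IsClosed k ∧ k ≤ u}))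
    refine le_iInf ?_
    rintro ⟨b, hkb⟩
    have hbJ : b ∉ J := fun hbJ => hkoJ (hkb.trans (le_sSup ⟨b, hbJ, rfl⟩))
    have : F.dia b ∈ P := not_not.1 hbJ
    exact sInf_le ⟨F.dia b, this, rfl⟩

end CoreArgument

/-! ## Statement 7: canonicity of axiom BD1 -/

/-- **Canonicity of axiom BD1**: in the canonical extension of a heterogeneous
LRC-algebra, `◇'^σ q ⊓ (q ▷^π u) ≤ ◇^σ u` for all `q ∈ Rδ` and `u ∈ Wδ`. -/
theorem canonicity_bd1 (F : LRCAlgebra W R)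
    (CW : CanonicalExtension W Wδ) (CR : CanonicalExtension R Rδ)
    (q : Rδ) (u : Wδ) :
    diaRSigma F CW CR q ⊓ boxPi F CW CR q u ≤ diaSigma F CW u := by
  classical
  show (⨆ κ : {κ : Rδ // CR.IsClosed κ ∧ κ ≤ q},
      ⨅ α : {α : R // κ.1 ≤ CR.e α}, CW.e (F.diaR α.1)) ⊓ boxPi F CW CR q u ≤
    diaSigma F CW u
  rw [iSup_inf_eq]
  refine iSup_le ?_
  rintro ⟨κ, hκc, hκq⟩
  set t : Wδ := (⨅ α : {α : R // κ ≤ CR.e α}, CW.e (F.diaR α.1)) ⊓ boxPi F CW CR q u with ht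
  refine le_trans (le_of_eq (CW.dense_closed t)) (sSup_le ?_)
  rintro m ⟨⟨S, hS⟩, hmt⟩
  by_cases hmb : m = ⊥
  · simp [hmb]
  -- the filter of m
  set Fm : Set W := {w | m ≤ CW.e w} with hFm
  have hmZ := CW.closed_le_sSup_primes hS hmb
  refine hmZ.trans (sSup_le ?_)
  rintro x ⟨P, hPfil, hPpr, hbotP, hFmP, rfl⟩
  have hxm : sInf (CW.e '' P) ≤ m := by
    have hSFm : S ⊆ Fm := by
      intro s hs
      show m ≤ CW.e s
      rw [hS]
      exact sInf_le ⟨s, hs, rfl⟩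
    calc sInf (CW.e '' P) ≤ sInf (CW.e '' Fm) := sInf_le_sInf (Set.image_mono hFmP)
      _ ≤ sInf (CW.e '' S) := sInf_le_sInf (Set.image_mono hSFm)
      _ = m := hS.symm
  have h1 : ∀ α : R, κ ≤ CR.e α → F.diaR α ∈ P := by
    intro α hκα
    refine hFmP ?_
    show m ≤ CW.e (F.diaR α)
    calc m ≤ t := hmt
      _ ≤ ⨅ α : {α : R // κ ≤ CR.e α}, CW.e (F.diaR α.1) := inf_le_left
      _ ≤ CW.e (F.diaR α) := iInf_le _ (⟨α, hκα⟩ : {α : R // κ ≤ CR.e α})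
  have hbox : sInf (CW.e '' P) ≤ boxPi F CW CR q u :=
    hxm.trans (hmt.trans inf_le_right)
  exact prime_core F CW CR q u κ hκc hκq P hPfil hPpr hbotP h1 hbox
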